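/- For all a ≠ b in {1,2,3} and every p ∈ ℂⁿ × ℂⁿ, the gradients of the norm-squares of the three hyperkähler moment maps are orthogonal: Re⟪∇f_a(p), ∇f_b(p)⟫ = 0. -/

import Mathlib

open scoped Matrix

noncomputable section

/-- `T*ℂⁿ = ℂⁿ × ℂⁿ` with its L² (Hermitian) norm. -/
abbrev HypPhase (n : ℕ) := WithLp 2 (EuclideanSpace ℂ (Fin n) × EuclideanSpace ℂ (Fin n))

/-- Build a point of `T*ℂⁿ` from its two components. -/
def mkP {n : ℕ} (a b : EuclideanSpace ℂ (Fin n)) : HypPhase n :=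
  (WithLp.equiv 2 (EuclideanSpace ℂ (Fin n) × EuclideanSpace ℂ (Fin n))).symm (a, b)

/-- Matrix-vector multiplication, viewed as a map on Euclidean space. -/
def mulVecE {n : ℕ} (ξ : Matrix (Fin n) (Fin n) ℂ) (x : EuclideanSpace ℂ (Fin n)) :
    EuclideanSpace ℂ (Fin n) :=
  (WithLp.equiv 2 (Fin n → ℂ)).symm (ξ.mulVec (WithLp.equiv 2 (Fin n → ℂ) x))

/-- Entrywise complex conjugation on `ℂⁿ`. -/
def conjE {n : ℕ} (x : EuclideanSpace ℂ (Fin n)) : EuclideanSpace ℂ (Fin n) :=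
  (WithLp.equiv 2 (Fin n → ℂ)).symm (star (WithLp.equiv 2 (Fin n → ℂ) x))

/-- The action of `𝔨` on `T*ℂⁿ`: `ξ · (x, y) = (ξ x, ξ̄ y)`. -/
def act {n : ℕ} (ξ : Matrix (Fin n) (Fin n) ℂ) (p : HypPhase n) : HypPhase n :=
  mkP (mulVecE ξ p.ofLp.1) (mulVecE (ξ.map (starRingEnd ℂ)) p.ofLp.2)

/-- The real Frobenius inner product `⟪ξ,η⟫ = Re (tr (ξᴴ η))` on complex matrices. -/
def innK {n : ℕ} (ξ η : Matrix (Fin n) (Fin n) ℂ) : ℝ :=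
  (Matrix.trace (ξᴴ * η)).re

namespace Stmt6Aux

open ComplexConjugate

variable {n : ℕ}

local notation "E" => EuclideanSpace ℂ (Fin n)
local notation "M" => Matrix (Fin n) (Fin n) ℂ
local notation "H" => HypPhase n

/-! ### Component-level lemmas -/

lemma mulVecE_apply (ξ : M) (x : E) (i : Fin n) : mulVecE ξ x i = ∑ j, ξ i j * x j := rfl
lemma conjE_apply (x : E) (i : Fin n) : conjE x i = conj (x i) := rfl
lemma mkP_fst (a b : E) : (mkP a b).ofLp.1 = a := rfl
lemma mkP_snd (a b : E) : (mkP a b).ofLp.2 = b := rfl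
lemma Hext {u v : H} (h1 : u.ofLp.1 = v.ofLp.1) (h2 : u.ofLp.2 = v.ofLp.2) : u = v := WithLp.ofLp_injective 2 (Prod.ext h1 h2)
lemma Eext {x y : E} (h : ∀ i, x i = y i) : x = y := WithLp.ofLp_injective 2 (funext h)

lemma inner_E (x y : E) : (inner ℂ x y : ℂ) = ∑ i, conj (x i) * y i := by
  simp [PiLp.inner_apply, RCLike.inner_apply', mul_comm]

lemma inner_mulVecE_left (ξ : M) (x y : E) :
    (inner ℂ (mulVecE ξ x) y : ℂ) = inner ℂ x (mulVecE ξᴴ y) := by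
  simp only [inner_E, mulVecE_apply, Matrix.conjTranspose_apply, map_sum, map_mul,
    Finset.sum_mul, Finset.mul_sum]
  rw [Finset.sum_comm]
  refine Finset.sum_congr rfl fun j _ => Finset.sum_congr rfl fun i _ => ?_
  simp only [starRingEnd_apply]
  ring

lemma inner_conjE_symm (x y : E) : (inner ℂ (conjE x) y : ℂ) = inner ℂ (conjE y) x := by
  simp only [inner_E, conjE_apply, Complex.conj_conj]
  exact Finset.sum_congr rfl fun i _ => mul_comm _ _

lemma inner_conjE_right (x y : E) : (inner ℂ x (conjE y) : ℂ) = conj (inner ℂ (conjE x) y : ℂ) := by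
  simp only [inner_E, conjE_apply, Complex.conj_conj, map_sum, map_mul]

lemma conjE_conjE (x : E) : conjE (conjE x) = x := Eext fun i => by
  simp [conjE_apply]

lemma conjE_mulVecE (ξ : M) (x : E) :
    conjE (mulVecE ξ x) = mulVecE (ξ.map (starRingEnd ℂ)) (conjE x) := Eext fun i => by
  simp [conjE_apply, mulVecE_apply, map_sum, Matrix.map_apply]

lemma conjE_add (x y : E) : conjE (x + y) = conjE x + conjE y := Eext fun i => by
  simp [conjE_apply]

lemma conjE_neg (x : E) : conjE (-x) = -conjE x := Eext fun i => by
  simp [conjE_apply]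

lemma conjE_smul (c : ℂ) (x : E) : conjE (c • x) = conj c • conjE x := Eext fun i => by
  simp [conjE_apply]

lemma conjE_smulR (r : ℝ) (x : E) : conjE (r • x) = r • conjE x := Eext fun i => by
  simp [conjE_apply]

lemma mulVecE_add (ξ : M) (x y : E) : mulVecE ξ (x + y) = mulVecE ξ x + mulVecE ξ y :=
  Eext fun i => by simp [mulVecE_apply, mul_add, Finset.sum_add_distrib]

lemma mulVecE_smul (ξ : M) (c : ℂ) (x : E) : mulVecE ξ (c • x) = c • mulVecE ξ x :=
  Eext fun i => by
    simp [mulVecE_apply, Finset.mul_sum]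
    exact Finset.sum_congr rfl fun j _ => by ring

lemma mulVecE_smulR (ξ : M) (r : ℝ) (x : E) : mulVecE ξ (r • x) = r • mulVecE ξ x :=
  Eext fun i => by
    show ∑ j, ξ i j * (r • x) j = r • ∑ j, ξ i j * x j
    rw [Finset.smul_sum]
    exact Finset.sum_congr rfl fun j _ => by simp [Complex.real_smul]; ring

lemma mulVecE_neg (ξ : M) (x : E) : mulVecE ξ (-x) = -mulVecE ξ x :=
  Eext fun i => by simp [mulVecE_apply, Finset.sum_neg_distrib]

lemma neg_mulVecE (ξ : M) (x : E) : mulVecE (-ξ) x = -mulVecE ξ x :=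
  Eext fun i => by simp [mulVecE_apply, Finset.sum_neg_distrib]

lemma mulVecE_addM (ξ η : M) (x : E) : mulVecE (ξ + η) x = mulVecE ξ x + mulVecE η x :=
  Eext fun i => by simp [mulVecE_apply, add_mul, Finset.sum_add_distrib]

lemma mulVecE_smulRM (r : ℝ) (ξ : M) (x : E) : mulVecE (r • ξ) x = r • mulVecE ξ x :=
  Eext fun i => by
    show ∑ j, (r • ξ) i j * x j = r • ∑ j, ξ i j * x j
    rw [Finset.smul_sum]
    exact Finset.sum_congr rfl fun j _ => by
      simp [Matrix.smul_apply, Complex.real_smul]; ring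

lemma mulVecE_mulVecE (ξ η : M) (x : E) : mulVecE ξ (mulVecE η x) = mulVecE (ξ * η) x :=
  Eext fun i => by
    simp only [mulVecE_apply, Matrix.mul_apply, Finset.mul_sum, Finset.sum_mul]
    rw [Finset.sum_comm]
    exact Finset.sum_congr rfl fun j _ => Finset.sum_congr rfl fun k _ => by ring

lemma map_conj_map_conj (ξ : M) : (ξ.map (starRingEnd ℂ)).map (starRingEnd ℂ) = ξ := by
  ext i j; simp [Matrix.map_apply]

lemma conjTranspose_map_conj (ξ : M) :
    (ξ.map (starRingEnd ℂ))ᴴ = ξᴴ.map (starRingEnd ℂ) := by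
  ext i j; rfl

/-! ### The complex structures as plain maps -/

def J0 (p : H) : H := Complex.I • p
def J1 (p : H) : H := mkP (-(conjE p.ofLp.2)) (conjE p.ofLp.1)
def J2 (p : H) : H := J0 (J1 p)

lemma J0_fst (p : H) : (J0 p).ofLp.1 = Complex.I • p.ofLp.1 := rfl
lemma J0_snd (p : H) : (J0 p).ofLp.2 = Complex.I • p.ofLp.2 := rfl
lemma J1_fst (p : H) : (J1 p).ofLp.1 = -(conjE p.ofLp.2) := rfl
lemma J1_snd (p : H) : (J1 p).ofLp.2 = conjE p.ofLp.1 := rfl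
lemma act_fst (ξ : M) (p : H) : (act ξ p).ofLp.1 = mulVecE ξ p.ofLp.1 := rfl
lemma act_snd (ξ : M) (p : H) : (act ξ p).ofLp.2 = mulVecE (ξ.map (starRingEnd ℂ)) p.ofLp.2 := rfl
lemma add_fst (p q : H) : (p + q).ofLp.1 = p.ofLp.1 + q.ofLp.1 := rfl
lemma add_snd (p q : H) : (p + q).ofLp.2 = p.ofLp.2 + q.ofLp.2 := rfl
lemma smulR_fst (r : ℝ) (p : H) : (r • p).ofLp.1 = r • p.ofLp.1 := rfl
lemma smulR_snd (r : ℝ) (p : H) : (r • p).ofLp.2 = r • p.ofLp.2 := rfl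
lemma neg_fst (p : H) : (-p).ofLp.1 = -p.ofLp.1 := rfl
lemma neg_snd (p : H) : (-p).ofLp.2 = -p.ofLp.2 := rfl

/-! ### Commutation of the action with the complex structures -/

lemma act_add (ξ : M) (p q : H) : act ξ (p + q) = act ξ p + act ξ q :=
  Hext (by simp [-WithLp.ofLp_fst, -WithLp.ofLp_snd, act_fst, add_fst, mulVecE_add]) (by simp [-WithLp.ofLp_fst, -WithLp.ofLp_snd, act_snd, add_snd, mulVecE_add])

lemma act_smulR (ξ : M) (r : ℝ) (p : H) : act ξ (r • p) = r • act ξ p :=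
  Hext (by simp [-WithLp.ofLp_fst, -WithLp.ofLp_snd, act_fst, smulR_fst, mulVecE_smulR])
    (by simp [-WithLp.ofLp_fst, -WithLp.ofLp_snd, act_snd, smulR_snd, mulVecE_smulR])

lemma act_addM (ξ η : M) (p : H) : act (ξ + η) p = act ξ p + act η p :=
  Hext (by simp [-WithLp.ofLp_fst, -WithLp.ofLp_snd, act_fst, add_fst, mulVecE_addM])
    (by simp [-WithLp.ofLp_fst, -WithLp.ofLp_snd, act_snd, add_snd, Matrix.map_add, mulVecE_addM])

lemma act_smulRM (r : ℝ) (ξ : M) (p : H) : act (r • ξ) p = r • act ξ p := by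
  refine Hext (by simp [-WithLp.ofLp_fst, -WithLp.ofLp_snd, act_fst, smulR_fst, mulVecE_smulRM]) ?_
  have hmap : (r • ξ).map (starRingEnd ℂ) = r • ξ.map (starRingEnd ℂ) := by
    ext i j
    simp [Matrix.map_apply, Matrix.smul_apply, Complex.real_smul]
  simp [-WithLp.ofLp_fst, -WithLp.ofLp_snd, act_snd, smulR_snd, hmap, mulVecE_smulRM]

lemma act_J0 (ξ : M) (p : H) : act ξ (J0 p) = J0 (act ξ p) :=
  Hext (by simp [-WithLp.ofLp_fst, -WithLp.ofLp_snd, act_fst, J0_fst, mulVecE_smul])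
    (by simp [-WithLp.ofLp_fst, -WithLp.ofLp_snd, act_snd, J0_snd, mulVecE_smul])

lemma act_J1 (ξ : M) (p : H) : act ξ (J1 p) = J1 (act ξ p) := by
  refine Hext ?_ ?_
  · show mulVecE ξ (-(conjE p.ofLp.2)) = -(conjE (mulVecE (ξ.map (starRingEnd ℂ)) p.ofLp.2))
    rw [conjE_mulVecE, map_conj_map_conj, mulVecE_neg]
  · show mulVecE (ξ.map (starRingEnd ℂ)) (conjE p.ofLp.1) = conjE (mulVecE ξ p.ofLp.1)
    rw [conjE_mulVecE]

lemma act_J2 (ξ : M) (p : H) : act ξ (J2 p) = J2 (act ξ p) := by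
  unfold J2; rw [act_J0, act_J1]

lemma act_act (ξ η : M) (hcomm : ξ * η = η * ξ) (p : H) :
    act ξ (act η p) = act η (act ξ p) := by
  refine Hext ?_ ?_
  · show mulVecE ξ (mulVecE η p.ofLp.1) = mulVecE η (mulVecE ξ p.ofLp.1)
    rw [mulVecE_mulVecE, mulVecE_mulVecE, hcomm]
  · show mulVecE (ξ.map (starRingEnd ℂ)) (mulVecE (η.map (starRingEnd ℂ)) p.ofLp.2)
        = mulVecE (η.map (starRingEnd ℂ)) (mulVecE (ξ.map (starRingEnd ℂ)) p.ofLp.2)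
    rw [mulVecE_mulVecE, mulVecE_mulVecE, ← Matrix.map_mul, ← Matrix.map_mul, hcomm]

/-! ### Compositions of the complex structures -/

lemma J0_J0 (p : H) : J0 (J0 p) = -p := by
  unfold J0; rw [smul_smul, Complex.I_mul_I, neg_one_smul]

lemma J1_J1 (p : H) : J1 (J1 p) = -p := by
  refine Hext ?_ ?_
  · show -(conjE (conjE p.ofLp.1)) = -p.ofLp.1
    rw [conjE_conjE]
  · show conjE (-(conjE p.ofLp.2)) = -p.ofLp.2
    rw [conjE_neg, conjE_conjE]

lemma J1_J0 (p : H) : J1 (J0 p) = -(J2 p) := by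
  refine Hext ?_ ?_
  · show -(conjE (Complex.I • p.ofLp.2)) = -(Complex.I • (-(conjE p.ofLp.2)))
    rw [conjE_smul]
    simp [Complex.conj_I, smul_smul]
  · show conjE (Complex.I • p.ofLp.1) = -(Complex.I • conjE p.ofLp.1)
    rw [conjE_smul]
    simp [Complex.conj_I]

lemma J1_neg (p : H) : J1 (-p) = -(J1 p) :=
  Hext (by show -(conjE (-p.ofLp.2)) = - -(conjE p.ofLp.2); rw [conjE_neg])
    (by show conjE (-p.ofLp.1) = -(conjE p.ofLp.1); rw [conjE_neg])

lemma J0_neg (p : H) : J0 (-p) = -(J0 p) := by unfold J0; rw [smul_neg]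
lemma J2_neg (p : H) : J2 (-p) = -(J2 p) := by unfold J2; rw [J1_neg, J0_neg]

lemma J2_J0 (p : H) : J2 (J0 p) = J1 p := by
  unfold J2; rw [J1_J0]
  unfold J2; rw [J0_neg, J0_J0, neg_neg]

lemma J0_J2 (p : H) : J0 (J2 p) = -(J1 p) := by
  unfold J2; rw [J0_J0]

lemma J1_J2 (p : H) : J1 (J2 p) = J0 p := by
  unfold J2; rw [J1_J0]
  unfold J2; rw [J1_J1, J0_neg, neg_neg]

lemma J2_J1 (p : H) : J2 (J1 p) = -(J0 p) := by
  unfold J2; rw [J1_J1, J0_neg]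

/-! ### Inner product identities -/

lemma inner_H (u v : H) : (inner ℂ u v : ℂ) = inner ℂ u.ofLp.1 v.ofLp.1 + inner ℂ u.ofLp.2 v.ofLp.2 :=
  WithLp.prod_inner_apply u v

lemma reInner (u v : H) : (inner ℂ u v : ℂ).re = (inner ℝ u v : ℝ) := by
  rw [inner_H]
  show _ = (inner ℝ u.ofLp.1 v.ofLp.1 : ℝ) + (inner ℝ u.ofLp.2 v.ofLp.2 : ℝ)
  rw [Complex.add_re]
  congr 1 <;>
  · rw [PiLp.inner_apply, PiLp.inner_apply, Complex.re_sum]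
    exact Finset.sum_congr rfl fun i _ => (Complex.inner _ _).symm

lemma inner_act_skew (ξ : M) (hξ : ξᴴ = -ξ) (u v : H) :
    (inner ℂ (act ξ u) v : ℂ) = -(inner ℂ u (act ξ v) : ℂ) := by
  rw [inner_H, inner_H, act_fst, act_snd, act_fst, act_snd,
    inner_mulVecE_left, inner_mulVecE_left, conjTranspose_map_conj, hξ]
  have : (-ξ).map (starRingEnd ℂ) = -(ξ.map (starRingEnd ℂ)) := by
    ext i j; simp [Matrix.map_apply]
  rw [this, neg_mulVecE, neg_mulVecE, inner_neg_right, inner_neg_right]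
  ring

lemma inner_J0_skew (u v : H) : (inner ℂ (J0 u) v : ℂ) = -(inner ℂ u (J0 v) : ℂ) := by
  unfold J0
  rw [inner_smul_left, inner_smul_right, Complex.conj_I]
  ring

lemma re_inner_J1_skew (u v : H) :
    (inner ℂ (J1 u) v : ℂ).re = -(inner ℂ u (J1 v) : ℂ).re := by
  have h : (inner ℂ u (J1 v) : ℂ) = conj (-(inner ℂ (J1 u) v : ℂ)) := by
    rw [inner_H, inner_H]
    show (inner ℂ u.ofLp.1 (-(conjE v.ofLp.2)) : ℂ) + (inner ℂ u.ofLp.2 (conjE v.ofLp.1) : ℂ)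
      = conj (-((inner ℂ (-(conjE u.ofLp.2)) v.ofLp.1 : ℂ) + (inner ℂ (conjE u.ofLp.1) v.ofLp.2 : ℂ)))
    rw [inner_neg_right, inner_neg_left, inner_conjE_right, inner_conjE_right,
      inner_conjE_symm (u.ofLp.2) (v.ofLp.1)]
    simp only [map_neg, map_add, neg_add, neg_neg]
    ring
  rw [h, Complex.conj_re, Complex.neg_re, neg_neg]

lemma re_inner_J2_skew (u v : H) :
    (inner ℂ (J2 u) v : ℂ).re = -(inner ℂ u (J2 v) : ℂ).re := by
  unfold J2
  rw [inner_J0_skew, Complex.neg_re, re_inner_J1_skew (u) (J0 v), J1_J0]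
  have : (inner ℂ u (-(J2 v)) : ℂ) = -(inner ℂ u (J2 v) : ℂ) := inner_neg_right _ _
  rw [this, Complex.neg_re]
  unfold J2
  ring

/-! ### Real inner product versions -/

lemma r_act_skew (ξ : M) (hξ : ξᴴ = -ξ) (u v : H) :
    (inner ℝ (act ξ u) v : ℝ) = -(inner ℝ u (act ξ v) : ℝ) := by
  rw [← reInner, ← reInner, inner_act_skew ξ hξ, Complex.neg_re]

lemma r_J0_skew (u v : H) : (inner ℝ (J0 u) v : ℝ) = -(inner ℝ u (J0 v) : ℝ) := by
  rw [← reInner, ← reInner, inner_J0_skew, Complex.neg_re]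

lemma r_J1_skew (u v : H) : (inner ℝ (J1 u) v : ℝ) = -(inner ℝ u (J1 v) : ℝ) := by
  rw [← reInner, ← reInner, re_inner_J1_skew]

lemma r_J2_skew (u v : H) : (inner ℝ (J2 u) v : ℝ) = -(inner ℝ u (J2 v) : ℝ) := by
  rw [← reInner, ← reInner, re_inner_J2_skew]

/-! ### The key orthogonality lemma -/

lemma key (ξ η : M) (hξ : ξᴴ = -ξ) (hη : ηᴴ = -η) (hcomm : ξ * η = η * ξ)
    (Jc : H → H)
    (hJskew : ∀ u v : H, (inner ℝ (Jc u) v : ℝ) = -(inner ℝ u (Jc v) : ℝ))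
    (hJact : ∀ (ζ : M) (q : H), act ζ (Jc q) = Jc (act ζ q)) (p : H) :
    (inner ℝ (act ξ p) (Jc (act η p)) : ℝ) = 0 := by
  have h1 : (inner ℝ (act ξ p) (Jc (act η p)) : ℝ)
      = -(inner ℝ p (act ξ (Jc (act η p))) : ℝ) := r_act_skew ξ hξ _ _
  have h2 : act ξ (Jc (act η p)) = Jc (act η (act ξ p)) := by
    rw [hJact, act_act ξ η hcomm]
  have h3 : (inner ℝ p (Jc (act η (act ξ p))) : ℝ)
      = -(inner ℝ (Jc p) (act η (act ξ p)) : ℝ) := by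
    rw [real_inner_comm, hJskew, real_inner_comm]
  have h4 : (inner ℝ (Jc p) (act η (act ξ p)) : ℝ)
      = -(inner ℝ (act η (Jc p)) (act ξ p) : ℝ) := by
    rw [real_inner_comm, r_act_skew η hη, real_inner_comm]
  have h5 : act η (Jc p) = Jc (act η p) := hJact η p
  have h6 : (inner ℝ (Jc (act η p)) (act ξ p) : ℝ)
      = (inner ℝ (act ξ p) (Jc (act η p)) : ℝ) := real_inner_comm _ _
  have := h1
  rw [h2, h3, h4, h5, h6] at this
  linarith

/-! ### Pairwise orthogonality for distinct complex structures -/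

lemma r_inner_neg_right (u v : H) : (inner ℝ u (-v) : ℝ) = -(inner ℝ u v : ℝ) :=
  inner_neg_right u v

lemma main_orth (ξ η : M) (hξ : ξᴴ = -ξ) (hη : ηᴴ = -η) (hcomm : ξ * η = η * ξ)
    (p : H) :
    ∀ (Ja Jb : H → H), (Ja = J0 ∧ Jb = J1 ∨ Ja = J0 ∧ Jb = J2 ∨ Ja = J1 ∧ Jb = J0 ∨
      Ja = J1 ∧ Jb = J2 ∨ Ja = J2 ∧ Jb = J0 ∨ Ja = J2 ∧ Jb = J1) →
    (inner ℝ (Ja (act ξ p)) (Jb (act η p)) : ℝ) = 0 := by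
  have k0 := key ξ η hξ hη hcomm J0 r_J0_skew act_J0 p
  have k1 := key ξ η hξ hη hcomm J1 r_J1_skew act_J1 p
  have k2 := key ξ η hξ hη hcomm J2 r_J2_skew act_J2 p
  rintro Ja Jb (⟨rfl, rfl⟩ | ⟨rfl, rfl⟩ | ⟨rfl, rfl⟩ | ⟨rfl, rfl⟩ | ⟨rfl, rfl⟩ | ⟨rfl, rfl⟩)
  · rw [r_J0_skew]
    rw [show J0 (J1 (act η p)) = J2 (act η p) from rfl, k2, neg_zero]
  · rw [r_J0_skew, J0_J2, r_inner_neg_right, k1, neg_zero, neg_zero]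
  · rw [r_J1_skew, J1_J0, r_inner_neg_right, k2, neg_zero, neg_zero]
  · rw [r_J1_skew, J1_J2, k0, neg_zero]
  · rw [r_J2_skew, J2_J0, k1, neg_zero]
  · rw [r_J2_skew, J2_J1, r_inner_neg_right, k0, neg_zero, neg_zero]

/-! ### Continuous linear maps -/

def actLM (ξ : M) : H →ₗ[ℝ] H where
  toFun := act ξ
  map_add' := act_add ξ
  map_smul' := act_smulR ξ

def actL (ξ : M) : H →L[ℝ] H := LinearMap.toContinuousLinearMap (actLM ξ)

@[simp] lemma actL_apply (ξ : M) (p : H) : actL ξ p = act ξ p := rfl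

lemma J0_add (p q : H) : J0 (p + q) = J0 p + J0 q := smul_add _ _ _
lemma J0_smulR (r : ℝ) (p : H) : J0 (r • p) = r • J0 p := smul_comm _ _ _

lemma J1_add (p q : H) : J1 (p + q) = J1 p + J1 q :=
  Hext (by show -(conjE (p.ofLp.2 + q.ofLp.2)) = -(conjE p.ofLp.2) + -(conjE q.ofLp.2)
           rw [conjE_add, neg_add])
    (by show conjE (p.ofLp.1 + q.ofLp.1) = conjE p.ofLp.1 + conjE q.ofLp.1; rw [conjE_add])

lemma J1_smulR (r : ℝ) (p : H) : J1 (r • p) = r • J1 p :=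
  Hext (by show -(conjE (r • p.ofLp.2)) = r • (-(conjE p.ofLp.2))
           rw [conjE_smulR, smul_neg])
    (by show conjE (r • p.ofLp.1) = r • conjE p.ofLp.1; rw [conjE_smulR])

lemma J2_add (p q : H) : J2 (p + q) = J2 p + J2 q := by
  unfold J2; rw [J1_add, J0_add]

lemma J2_smulR (r : ℝ) (p : H) : J2 (r • p) = r • J2 p := by
  unfold J2; rw [J1_smulR, J0_smulR]

def J0L : H →L[ℝ] H := LinearMap.toContinuousLinearMap
  { toFun := J0, map_add' := J0_add, map_smul' := J0_smulR }
def J1L : H →L[ℝ] H := LinearMap.toContinuousLinearMap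
  { toFun := J1, map_add' := J1_add, map_smul' := J1_smulR }
def J2L : H →L[ℝ] H := LinearMap.toContinuousLinearMap
  { toFun := J2, map_add' := J2_add, map_smul' := J2_smulR }

@[simp] lemma J0L_apply (p : H) : J0L p = J0 p := rfl
@[simp] lemma J1L_apply (p : H) : J1L p = J1 p := rfl
@[simp] lemma J2L_apply (p : H) : J2L p = J2 p := rfl

/-! ### Gradient of a half-quadratic form -/

lemma hasGradientAt_half_bilin (L : HypPhase n →L[ℝ] HypPhase n)
    (hsym : ∀ u v : H, (inner ℝ (L u) v : ℝ) = (inner ℝ (L v) u : ℝ)) (r : ℝ) (p : H) :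
    HasGradientAt (fun q : H => (1/2 : ℝ) * (inner ℝ (L q) q : ℝ) - r) (L p) p := by
  rw [hasGradientAt_iff_hasFDerivAt]
  have hb : IsBoundedBilinearMap ℝ
      (fun q : HypPhase n × HypPhase n => (inner ℝ q.1 q.2 : ℝ)) :=
    isBoundedBilinearMap_inner
  have hlin : HasFDerivAt (fun q : H => (L q, q))
      (L.prod (ContinuousLinearMap.id ℝ (HypPhase n))) p :=
    (L.prod (ContinuousLinearMap.id ℝ (HypPhase n))).hasFDerivAt
  have h1' := HasFDerivAt.comp (g := fun q : HypPhase n × HypPhase n => (inner ℝ q.1 q.2 : ℝ))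
    (f := fun q : HypPhase n => (L q, q)) p (hb.hasFDerivAt (L p, p)) hlin
  have h1 : HasFDerivAt (fun q : H => (inner ℝ (L q) q : ℝ))
      ((hb.deriv (L p, p)).comp (L.prod (ContinuousLinearMap.id ℝ (HypPhase n)))) p := h1'
  have h2 := (h1.const_mul (1/2 : ℝ)).sub_const r
  have heq : (1/2 : ℝ) • ((hb.deriv (L p, p)).comp
      (L.prod (ContinuousLinearMap.id ℝ (HypPhase n))))
      = (InnerProductSpace.toDual ℝ (HypPhase n)) (L p) := by
    ext v
    simp only [ContinuousLinearMap.smul_apply, ContinuousLinearMap.coe_comp',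
      Function.comp_apply, ContinuousLinearMap.prod_apply,
      ContinuousLinearMap.coe_id', id_eq, InnerProductSpace.toDual_apply_apply]
    rw [hb.deriv_apply]
    show (1/2 : ℝ) * ((inner ℝ (L p) v : ℝ) + (inner ℝ (L v) p : ℝ)) = (inner ℝ (L p) v : ℝ)
    rw [hsym v p]
    ring
  rw [← heq]
  exact h2

/-! ### Frobenius inner product lemmas -/

lemma innK_apply_sum (ξ η : M) :
    innK ξ η = ∑ j, ∑ k, ((starRingEnd ℂ) (ξ k j) * η k j).re := by
  simp only [innK, Matrix.trace, Matrix.diag, Matrix.mul_apply, Matrix.conjTranspose_apply,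
    Complex.re_sum]
  rfl

lemma innK_symm (ξ η : M) : innK ξ η = innK η ξ := by
  rw [innK_apply_sum, innK_apply_sum]
  refine Finset.sum_congr rfl fun j _ => Finset.sum_congr rfl fun k _ => ?_
  simp [Complex.mul_re]
  ring

lemma innK_add_left (ξ η ζ : M) : innK (ξ + η) ζ = innK ξ ζ + innK η ζ := by
  simp only [innK_apply_sum, ← Finset.sum_add_distrib]
  refine Finset.sum_congr rfl fun j _ => Finset.sum_congr rfl fun k _ => ?_
  simp [Matrix.add_apply, add_mul]

lemma innK_smul_left (r : ℝ) (ξ ζ : M) : innK (r • ξ) ζ = r * innK ξ ζ := by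
  simp only [innK_apply_sum, Finset.mul_sum]
  refine Finset.sum_congr rfl fun j _ => Finset.sum_congr rfl fun k _ => ?_
  simp [Matrix.smul_apply, Complex.real_smul, Complex.mul_re]
  ring

lemma innK_nonneg (ξ : M) : 0 ≤ innK ξ ξ := by
  rw [innK_apply_sum]
  refine Finset.sum_nonneg fun j _ => Finset.sum_nonneg fun k _ => ?_
  rw [Complex.mul_re]
  simp [Complex.conj_re, Complex.conj_im]
  nlinarith [sq_nonneg (ξ k j).re, sq_nonneg (ξ k j).im]

lemma innK_definite (ξ : M) (h : innK ξ ξ = 0) : ξ = 0 := by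
  rw [innK_apply_sum] at h
  have hterm : ∀ j ∈ Finset.univ, ∀ k ∈ Finset.univ,
      ((starRingEnd ℂ) (ξ k j) * ξ k j).re = 0 := by
    intro j _ k _
    have h1 : ∀ j ∈ (Finset.univ : Finset (Fin n)),
        0 ≤ ∑ k, ((starRingEnd ℂ) (ξ k j) * ξ k j).re := by
      intro j _
      refine Finset.sum_nonneg fun k _ => ?_
      rw [Complex.mul_re]; simp [Complex.conj_re, Complex.conj_im]
      nlinarith [sq_nonneg (ξ k j).re, sq_nonneg (ξ k j).im]
    have h2 := (Finset.sum_eq_zero_iff_of_nonneg h1).mp h j (Finset.mem_univ j)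
    have h3 : ∀ k ∈ (Finset.univ : Finset (Fin n)),
        0 ≤ ((starRingEnd ℂ) (ξ k j) * ξ k j).re := by
      intro k _
      rw [Complex.mul_re]; simp [Complex.conj_re, Complex.conj_im]
      nlinarith [sq_nonneg (ξ k j).re, sq_nonneg (ξ k j).im]
    exact (Finset.sum_eq_zero_iff_of_nonneg h3).mp h2 k (Finset.mem_univ k)
  ext k j
  have := hterm j (Finset.mem_univ j) k (Finset.mem_univ k)
  rw [Complex.mul_re] at this
  simp only [Complex.conj_re, Complex.conj_im] at this
  have hre : (ξ k j).re = 0 := by nlinarith [sq_nonneg (ξ k j).re, sq_nonneg (ξ k j).im]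
  have him : (ξ k j).im = 0 := by nlinarith [sq_nonneg (ξ k j).re, sq_nonneg (ξ k j).im]
  simp [Complex.ext_iff, hre, him]

noncomputable def Kinner (𝔨 : Submodule ℝ (Matrix (Fin n) (Fin n) ℂ)) : Inner ℝ ↥𝔨 :=
  ⟨fun x y => innK (x : Matrix (Fin n) (Fin n) ℂ) (y : Matrix (Fin n) (Fin n) ℂ)⟩

lemma Kinner_apply (𝔨 : Submodule ℝ (Matrix (Fin n) (Fin n) ℂ)) (x y : ↥𝔨) :
    @inner ℝ ↥𝔨 (Kinner 𝔨) x y = innK (x : Matrix (Fin n) (Fin n) ℂ) ↑y := rfl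

noncomputable def Kcore (𝔨 : Submodule ℝ (Matrix (Fin n) (Fin n) ℂ)) :
    InnerProductSpace.Core ℝ ↥𝔨 where
  toInner := Kinner 𝔨
  conj_inner_symm x y := innK_symm _ _
  re_inner_nonneg x := innK_nonneg _
  add_left x y z := by
    rw [Kinner_apply, Kinner_apply, Kinner_apply, Submodule.coe_add, innK_add_left]
  smul_left x y r := by
    rw [Kinner_apply, Kinner_apply, Submodule.coe_smul, innK_smul_left]
    rfl
  definite x hx := Subtype.ext (innK_definite _ hx)

def actRM (p : H) : M →ₗ[ℝ] H where
  toFun ζ := act ζ p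
  map_add' ζ η := act_addM ζ η p
  map_smul' r ζ := act_smulRM r ζ p

end Stmt6Aux

open Stmt6Aux

/-- For an abelian `𝔨`, the gradients of the norm-squares of the three
hyperkähler moment maps on `T*ℂⁿ` are pairwise orthogonal. -/
theorem stmt6 (n : ℕ) (𝔨 : Submodule ℝ (Matrix (Fin n) (Fin n) ℂ))
    (hskew : ∀ ξ ∈ 𝔨, ξᴴ = -ξ)
    (habelian : ∀ ξ ∈ 𝔨, ∀ η ∈ 𝔨, ξ * η = η * ξ)
    -- the three complex structures on `T*ℂⁿ`
    (I : Fin 3 → HypPhase n → HypPhase n)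
    (hI1 : I 0 = fun p => Complex.I • p)
    (hI2 : I 1 = fun p => mkP (-(conjE p.ofLp.2)) (conjE p.ofLp.1))
    (hI3 : I 2 = (I 0) ∘ (I 1))
    -- the three moment maps
    (α : Fin 3 → Matrix (Fin n) (Fin n) ℂ) (hα : ∀ a, α a ∈ 𝔨)
    (μ : Fin 3 → HypPhase n → Matrix (Fin n) (Fin n) ℂ)
    (hμmem : ∀ a p, μ a p ∈ 𝔨)
    (hμ : ∀ a, ∀ p : HypPhase n, ∀ ξ ∈ 𝔨,
      innK (μ a p) ξ = (1/2) * (inner ℂ (I a (act ξ p)) p : ℂ).re - innK (α a) ξ)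
    -- their norm-squares
    (f : Fin 3 → HypPhase n → ℝ) (hf : ∀ a p, f a p = innK (μ a p) (μ a p)) :
    ∀ a b : Fin 3, a ≠ b → ∀ p : HypPhase n,
      (inner ℂ (gradient (f a) p) (gradient (f b) p) : ℂ).re = 0 := by
  intro a b hab p
  -- dictionary between the abstract `I` and the concrete `J`s
  have hIJ0 : I 0 = J0 (n := n) := by rw [hI1]; rfl
  have hIJ1 : I 1 = J1 (n := n) := by rw [hI2]; rfl
  have hIJ2 : I 2 = J2 (n := n) := by rw [hI3, hIJ0, hIJ1]; rfl
  have hIJ : ∀ c : Fin 3, I c = ![J0 (n := n), J1, J2] c := by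
    intro c
    fin_cases c
    · exact hIJ0
    · exact hIJ1
    · exact hIJ2
  -- the inner-product space structure on 𝔨
  letI cd : InnerProductSpace.Core ℝ ↥𝔨 := Kcore 𝔨
  letI : NormedAddCommGroup ↥𝔨 := @InnerProductSpace.Core.toNormedAddCommGroup ℝ ↥𝔨 _ _ _ cd
  letI : InnerProductSpace ℝ ↥𝔨 := InnerProductSpace.ofCore cd.toCore
  haveI : FiniteDimensional ℝ ↥𝔨 := inferInstance
  set m := Module.finrank ℝ ↥𝔨 with hm
  let bb := stdOrthonormalBasis ℝ ↥𝔨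
  have hinner : ∀ x y : ↥𝔨, (inner ℝ x y : ℝ) = innK (x : Matrix (Fin n) (Fin n) ℂ) ↑y :=
    fun _ _ => rfl
  have hrepr : ∀ (x : ↥𝔨) (i : Fin m), bb.repr x i = innK (x : Matrix (Fin n) (Fin n) ℂ) ↑(bb i) := by
    intro x i
    rw [bb.repr_apply_apply, hinner, innK_symm]
  -- expansion of μ in the orthonormal basis
  have hexp : ∀ (c : Fin 3) (q : HypPhase n),
      μ c q = ∑ i : Fin m, innK (μ c q) ↑(bb i) • (↑(bb i) : Matrix (Fin n) (Fin n) ℂ) := by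
    intro c q
    set x : ↥𝔨 := ⟨μ c q, hμmem c q⟩ with hx
    have h1 := bb.sum_repr x
    have h2 : ((∑ i : Fin m, bb.repr x i • bb i : ↥𝔨) : Matrix (Fin n) (Fin n) ℂ)
        = (x : Matrix (Fin n) (Fin n) ℂ) := by rw [h1]
    rw [Submodule.coe_sum] at h2
    simp only [SetLike.val_smul] at h2
    have h3 : ∀ i : Fin m, bb.repr x i = innK (μ c q) ↑(bb i) := fun i => hrepr x i
    calc μ c q = (x : Matrix (Fin n) (Fin n) ℂ) := rfl
      _ = ∑ i : Fin m, bb.repr x i • (↑(bb i) : Matrix (Fin n) (Fin n) ℂ) := h2.symm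
      _ = ∑ i : Fin m, innK (μ c q) ↑(bb i) • (↑(bb i) : Matrix (Fin n) (Fin n) ℂ) := by
          exact Finset.sum_congr rfl fun i _ => by rw [h3 i]
  -- Parseval
  have hpar : ∀ (c : Fin 3) (q : HypPhase n),
      innK (μ c q) (μ c q) = ∑ i : Fin m, innK (μ c q) ↑(bb i) * innK (μ c q) ↑(bb i) := by
    intro c q
    set x : ↥𝔨 := ⟨μ c q, hμmem c q⟩ with hx
    have h0 : innK (μ c q) (μ c q) = (inner ℝ x x : ℝ) := rfl
    have h1 : (inner ℝ x x : ℝ) = ∑ i : Fin m, bb.repr x i * (inner ℝ (bb i) x : ℝ) := by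
      nth_rewrite 1 [← bb.sum_repr x]
      rw [sum_inner]
      exact Finset.sum_congr rfl fun i _ => real_inner_smul_left _ _ _
    rw [h0, h1]
    refine Finset.sum_congr rfl fun i _ => ?_
    rw [hrepr x i, hinner (bb i) x,
      innK_symm ((bb i : ↥𝔨) : Matrix (Fin n) (Fin n) ℂ) (x : Matrix (Fin n) (Fin n) ℂ)]
  -- gradient computation, uniform in the index
  have main : ∀ (c : Fin 3) (Jc : HypPhase n → HypPhase n) (JcL : HypPhase n →L[ℝ] HypPhase n),
      (∀ q, JcL q = Jc q) → I c = Jc →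
      (∀ u v : HypPhase n, (inner ℝ (Jc u) v : ℝ) = -(inner ℝ u (Jc v) : ℝ)) →
      (∀ (ζ : Matrix (Fin n) (Fin n) ℂ) (q : HypPhase n), act ζ (Jc q) = Jc (act ζ q)) →
      gradient (f c) p = (2 : ℝ) • Jc (act (μ c p) p) := by
    intro c Jc JcL hJcL hIc hskewJ hactJ
    -- symmetric bilinear form lemma
    have hsymL : ∀ (ξ : Matrix (Fin n) (Fin n) ℂ), ξ ∈ 𝔨 →
        ∀ u v : HypPhase n,
        (inner ℝ ((JcL.comp (actL ξ)) u) v : ℝ) = (inner ℝ ((JcL.comp (actL ξ)) v) u : ℝ) := by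
      intro ξ hξm u v
      have hξ := hskew ξ hξm
      show (inner ℝ (JcL (actL ξ u)) v : ℝ) = (inner ℝ (JcL (actL ξ v)) u : ℝ)
      rw [hJcL, hJcL, actL_apply, actL_apply, hskewJ, r_act_skew ξ hξ, neg_neg, hactJ,
        real_inner_comm]
    -- each coefficient function has an explicit gradient
    have hφ : ∀ i : Fin m, HasGradientAt (fun q => innK (μ c q) ↑(bb i))
        ((JcL.comp (actL (↑(bb i) : Matrix (Fin n) (Fin n) ℂ))) p) p := by
      intro i
      have hmem := (bb i).2
      have hfun : (fun q => innK (μ c q) ↑(bb i)) =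
          fun q : HypPhase n => (1/2 : ℝ) *
            (inner ℝ ((JcL.comp (actL (↑(bb i) : Matrix (Fin n) (Fin n) ℂ))) q) q : ℝ)
            - innK (α c) ↑(bb i) := by
        funext q
        have harg : (JcL.comp (actL (↑(bb i) : Matrix (Fin n) (Fin n) ℂ))) q
            = Jc (act (↑(bb i) : Matrix (Fin n) (Fin n) ℂ) q) := by
          show JcL (actL (↑(bb i) : Matrix (Fin n) (Fin n) ℂ) q) = _
          rw [hJcL, actL_apply]
        rw [hμ c q _ hmem, hIc, reInner, harg]
      rw [hfun]
      exact hasGradientAt_half_bilin _ (hsymL _ hmem) _ p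
    -- convert to fderivs and assemble
    have hD : ∀ i : Fin m, HasFDerivAt (fun q => innK (μ c q) ↑(bb i))
        ((InnerProductSpace.toDual ℝ (HypPhase n))
          ((JcL.comp (actL (↑(bb i) : Matrix (Fin n) (Fin n) ℂ))) p)) p :=
      fun i => hasGradientAt_iff_hasFDerivAt.mp (hφ i)
    have hfc : f c = fun q => ∑ i : Fin m,
        (innK (μ c q) ↑(bb i)) * (innK (μ c q) ↑(bb i)) := by
      funext q; rw [hf, hpar c q]
    have hsum : HasFDerivAt (f c)
        (∑ i : Fin m, ((innK (μ c p) ↑(bb i)) •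
            ((InnerProductSpace.toDual ℝ (HypPhase n))
              ((JcL.comp (actL (↑(bb i) : Matrix (Fin n) (Fin n) ℂ))) p))
          + (innK (μ c p) ↑(bb i)) •
            ((InnerProductSpace.toDual ℝ (HypPhase n))
              ((JcL.comp (actL (↑(bb i) : Matrix (Fin n) (Fin n) ℂ))) p)))) p := by
      rw [hfc]
      exact HasFDerivAt.fun_sum fun i _ => (hD i).mul (hD i)
    have hGrad : HasGradientAt (f c) ((2 : ℝ) • Jc (act (μ c p) p)) p := by
      rw [hasGradientAt_iff_hasFDerivAt]
      have heq : (InnerProductSpace.toDual ℝ (HypPhase n)) ((2 : ℝ) • Jc (act (μ c p) p))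
          = ∑ i : Fin m, ((innK (μ c p) ↑(bb i)) •
              ((InnerProductSpace.toDual ℝ (HypPhase n))
                ((JcL.comp (actL (↑(bb i) : Matrix (Fin n) (Fin n) ℂ))) p))
            + (innK (μ c p) ↑(bb i)) •
              ((InnerProductSpace.toDual ℝ (HypPhase n))
                ((JcL.comp (actL (↑(bb i) : Matrix (Fin n) (Fin n) ℂ))) p))) := by
        ext v
        simp only [InnerProductSpace.toDual_apply_apply, ContinuousLinearMap.sum_apply,
          ContinuousLinearMap.add_apply, ContinuousLinearMap.smul_apply,
          ContinuousLinearMap.coe_comp', Function.comp_apply, smul_eq_mul]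
        -- LHS: ⟪2 • Jc (act (μ c p) p), v⟫
        have hμexp : act (μ c p) p
            = ∑ i : Fin m, innK (μ c p) ↑(bb i) • act (↑(bb i) : Matrix (Fin n) (Fin n) ℂ) p := by
          conv_lhs => rw [hexp c p]
          rw [show act (∑ i : Fin m, innK (μ c p) ↑(bb i) • (↑(bb i) : Matrix (Fin n) (Fin n) ℂ)) p
            = actRM p (∑ i : Fin m, innK (μ c p) ↑(bb i) • (↑(bb i) : Matrix (Fin n) (Fin n) ℂ))
            from rfl, map_sum]
          exact Finset.sum_congr rfl fun i _ => by rw [map_smul]; rfl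
        have hJexp : Jc (act (μ c p) p)
            = ∑ i : Fin m, innK (μ c p) ↑(bb i) • Jc (act (↑(bb i) : Matrix (Fin n) (Fin n) ℂ) p) := by
          rw [hμexp, ← hJcL, map_sum]
          exact Finset.sum_congr rfl fun i _ => by rw [map_smul, hJcL]
        rw [hJexp, real_inner_smul_left, sum_inner, Finset.mul_sum]
        refine Finset.sum_congr rfl fun i _ => ?_
        rw [real_inner_smul_left]
        have : (inner ℝ (JcL (actL (↑(bb i) : Matrix (Fin n) (Fin n) ℂ) p)) v : ℝ)
            = (inner ℝ (Jc (act (↑(bb i) : Matrix (Fin n) (Fin n) ℂ) p)) v : ℝ) := by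
          rw [hJcL, actL_apply]
        rw [this]
        ring
      rw [heq]
      exact hsum
    exact hGrad.gradient
  -- apply to a and b
  have hskewJs : ∀ u v : HypPhase n,
      ((inner ℝ (J0 u) v : ℝ) = -(inner ℝ u (J0 v) : ℝ)) := r_J0_skew
  have grad_eq : ∀ c : Fin 3,
      gradient (f c) p = (2 : ℝ) • (![J0 (n := n), J1, J2] c) (act (μ c p) p) := by
    intro c
    fin_cases c
    · exact main 0 J0 J0L J0L_apply (hIJ 0) r_J0_skew act_J0
    · exact main 1 J1 J1L J1L_apply (hIJ 1) r_J1_skew act_J1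
    · exact main 2 J2 J2L J2L_apply (hIJ 2) r_J2_skew act_J2
  rw [grad_eq a, grad_eq b, reInner, real_inner_smul_left, real_inner_smul_right]
  have horth := main_orth (μ a p) (μ b p) (hskew _ (hμmem a p)) (hskew _ (hμmem b p))
    (habelian _ (hμmem a p) _ (hμmem b p)) p
  have hz : (inner ℝ ((![J0 (n := n), J1, J2] a) (act (μ a p) p))
      ((![J0 (n := n), J1, J2] b) (act (μ b p) p)) : ℝ) = 0 := by
    fin_cases a <;> fin_cases b
    · exact absurd rfl hab
    · exact horth _ _ (Or.inl ⟨rfl, rfl⟩)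
    · exact horth _ _ (Or.inr (Or.inl ⟨rfl, rfl⟩))
    · exact horth _ _ (Or.inr (Or.inr (Or.inl ⟨rfl, rfl⟩)))
    · exact absurd rfl hab
    · exact horth _ _ (Or.inr (Or.inr (Or.inr (Or.inl ⟨rfl, rfl⟩))))
    · exact horth _ _ (Or.inr (Or.inr (Or.inr (Or.inr (Or.inl ⟨rfl, rfl⟩)))))
    · exact horth _ _ (Or.inr (Or.inr (Or.inr (Or.inr (Or.inr ⟨rfl, rfl⟩)))))
    · exact absurd rfl hab
  rw [hz]
  ring
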